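/- Let μ, γ, φ, β, Cs, Ci, Cr be positive real numbers with Ci > Cs, let g(s,i,r) = Cs·Ci/(s·Cs + i·Ci + r·Cr), and consider the planar system di/dt = g(1-i-r, i, r)·β·i·(1-i-r) + φ·r·i - (γ+μ)·i, dr/dt = γ·i - φ·r·i - μ·r. Then this system has no nonconstant periodic solution contained in the region {(i,r) ∈ ℝ² : i > 0, r > 0, i + r < 1}: if x : ℝ → ℝ² is differentiable, satisfies x'(t) = (g₁(x(t)), g₂(x(t))) for all t, takes values in the region, and is periodic with some period T > 0, then x is constant. -/

import Mathlib

set_option maxHeartbeats 1600000 in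
theorem sir_aux
    (μ γ φ β Cs Ci Cr : ℝ)
    (hμ : 0 < μ) (hγ : 0 < γ) (hφ : 0 < φ) (hβ : 0 < β)
    (hCs : 0 < Cs) (hCi : 0 < Ci) (hCr : 0 < Cr) (hC : Ci > Cs)
    (i r : ℝ → ℝ)
    (hi : ∀ t, HasDerivAt i
      (Cs * Ci / ((1 - i t - r t) * Cs + i t * Ci + r t * Cr) * β * i t * (1 - i t - r t)
        + φ * r t * i t - (γ + μ) * i t) t)
    (hr : ∀ t, HasDerivAt r (γ * i t - φ * r t * i t - μ * r t) t)
    (hreg : ∀ t, 0 < i t ∧ 0 < r t ∧ i t + r t < 1)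
    (T : ℝ) (hT : 0 < T)
    (hper : ∀ t, i (t + T) = i t ∧ r (t + T) = r t) :
    ∀ t t', i t = i t' ∧ r t = r t' := by
  have hi0 : ∀ t, 0 < i t := fun t => (hreg t).1
  have hr0 : ∀ t, 0 < r t := fun t => (hreg t).2.1
  have hir : ∀ t, i t + r t < 1 := fun t => (hreg t).2.2
  have hi1 : ∀ t, i t < 1 := fun t => by have := hr0 t; have := hir t; linarith
  have hr1 : ∀ t, r t < 1 := fun t => by have := hi0 t; have := hir t; linarith
  have hD : ∀ t, 0 < (1 - i t - r t) * Cs + i t * Ci + r t * Cr := by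
    intro t
    have h1 : 0 < (1 - i t - r t) * Cs := mul_pos (by have := hir t; linarith) hCs
    have h2 : 0 < i t * Ci := mul_pos (hi0 t) hCi
    have h3 : 0 < r t * Cr := mul_pos (hr0 t) hCr
    linarith
  have hrper : Function.Periodic r T := fun t => (hper t).2
  have hidiff : Differentiable ℝ i := fun t => (hi t).differentiableAt
  have hrdiff : Differentiable ℝ r := fun t => (hr t).differentiableAt
  -- maximum of r and the bound φ * r t < γ
  obtain ⟨tM, htM, htMmax⟩ := (isCompact_Icc (a := (0:ℝ)) (b := T)).exists_isMaxOn
      (Set.nonempty_Icc.mpr hT.le) (hrdiff.continuous.continuousOn)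
  have hrle : ∀ t, r t ≤ r tM := by
    intro t
    obtain ⟨y, hy, hyeq⟩ := hrper.exists_mem_Ico₀ hT t
    rw [hyeq]
    exact htMmax (Set.mem_of_mem_of_subset hy Set.Ico_subset_Icc_self)
  have hmax : IsLocalMax r tM := Filter.Eventually.of_forall hrle
  have hfM : γ * i tM - φ * r tM * i tM - μ * r tM = 0 :=
    hmax.hasDerivAt_eq_zero (hr tM)
  have hφγ : ∀ t, φ * r t < γ := by
    intro t
    have h1 : φ * r tM < γ := by
      by_contra hcon
      push_neg at hcon
      have h2 : γ * i tM ≤ φ * r tM * i tM :=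
        mul_le_mul_of_nonneg_right hcon (hi0 tM).le
      nlinarith [mul_pos hμ (hr0 tM)]
    have h2 : φ * r t ≤ φ * r tM := mul_le_mul_of_nonneg_left (hrle t) hφ.le
    linarith
  -- the domain for the integral definition of W
  set U : Set ℝ := Set.Ioo 0 (min 1 (γ / φ)) with hUdef
  have hrU : ∀ t, r t ∈ U := by
    intro t
    refine ⟨hr0 t, lt_min (hr1 t) ?_⟩
    rw [lt_div_iff₀ hφ]
    have := hφγ t
    linarith
  set istar : ℝ → ℝ := fun ρ => μ * ρ / (γ - φ * ρ) with histar
  set w : ℝ → ℝ := fun ρ => (γ + μ) - φ * ρ + φ * istar ρ + μ * Real.log (istar ρ)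
      - Cs * Ci * β * (1 - istar ρ - ρ) /
        ((1 - istar ρ - ρ) * Cs + istar ρ * Ci + ρ * Cr) with hwdef
  have hUfacts : ∀ ρ ∈ U, 0 < γ - φ * ρ ∧ 0 < istar ρ ∧
      0 < (1 - istar ρ - ρ) * Cs + istar ρ * Ci + ρ * Cr := by
    intro ρ hρ
    obtain ⟨h0, h1⟩ := hρ
    have hlt1 : ρ < 1 := lt_of_lt_of_le h1 (min_le_left _ _)
    have hltγφ : ρ < γ / φ := lt_of_lt_of_le h1 (min_le_right _ _)
    have hp : 0 < γ - φ * ρ := by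
      have h2 : ρ * φ < γ := (lt_div_iff₀ hφ).mp hltγφ
      linarith
    have hist : 0 < istar ρ := div_pos (mul_pos hμ h0) hp
    have hDst : 0 < (1 - istar ρ - ρ) * Cs + istar ρ * Ci + ρ * Cr := by
      have he : (1 - istar ρ - ρ) * Cs + istar ρ * Ci + ρ * Cr
          = (1 - ρ) * Cs + ρ * Cr + istar ρ * (Ci - Cs) := by ring
      rw [he]
      have h3 := mul_pos hist (sub_pos.mpr hC)
      have h4 := mul_pos (by linarith : (0:ℝ) < 1 - ρ) hCs
      have h5 := mul_pos h0 hCr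
      linarith
    exact ⟨hp, hist, hDst⟩
  have hUopen : IsOpen U := isOpen_Ioo
  have hUord : Set.OrdConnected U := Set.ordConnected_Ioo
  have hwcont : ContinuousOn w U := by
    intro ρ hρ
    obtain ⟨hp, hist, hDst⟩ := hUfacts ρ hρ
    apply ContinuousAt.continuousWithinAt
    have cist : ContinuousAt istar ρ := by
      rw [histar]
      exact (continuousAt_const.mul continuousAt_id).div
        (continuousAt_const.sub (continuousAt_const.mul continuousAt_id)) hp.ne'
    have clog : ContinuousAt (fun ρ => Real.log (istar ρ)) ρ :=
      (Real.continuousAt_log hist.ne').comp cist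
    have cD : ContinuousAt
        (fun ρ => (1 - istar ρ - ρ) * Cs + istar ρ * Ci + ρ * Cr) ρ :=
      ((((continuousAt_const.sub cist).sub continuousAt_id).mul
        continuousAt_const).add (cist.mul continuousAt_const)).add
        (continuousAt_id.mul continuousAt_const)
    have cnum : ContinuousAt (fun ρ => Cs * Ci * β * (1 - istar ρ - ρ)) ρ :=
      continuousAt_const.mul ((continuousAt_const.sub cist).sub continuousAt_id)
    rw [hwdef]
    exact ((((continuousAt_const.sub (continuousAt_const.mul continuousAt_id)).add
      (continuousAt_const.mul cist)).add (continuousAt_const.mul clog)).sub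
      (cnum.div cD hDst.ne'))
  set W : ℝ → ℝ := fun ρ => ∫ s in (r 0)..ρ, w s with hWdef
  have hW : ∀ ρ ∈ U, HasDerivAt W (w ρ) ρ := by
    intro ρ hρ
    exact intervalIntegral.integral_hasDerivAt_right
      ((hwcont.mono (hUord.uIcc_subset (hrU 0) hρ)).intervalIntegrable)
      (hwcont.stronglyMeasurableAtFilter hUopen ρ hρ)
      (hwcont.continuousAt (hUopen.mem_nhds hρ))
  -- the Lyapunov function along the orbit
  set b : ℝ → ℝ := fun t => γ * i t - φ * r t * i t - μ * r t with hbdef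
  set Φ : ℝ → ℝ := fun t =>
    Cs * Ci / ((1 - i t - r t) * Cs + i t * Ci + r t * Cr) * β * (1 - i t - r t)
      + φ * r t - (γ + μ) - φ * i t - μ * Real.log (i t) + w (r t) with hΦdef
  set h : ℝ → ℝ := fun t =>
    γ * i t - φ * (r t * i t) - μ * (r t * Real.log (i t)) + W (r t) with hhdef
  have hh : ∀ t, HasDerivAt h (b t * Φ t) t := by
    intro t
    have d1 : HasDerivAt (fun u => γ * i u)
        (γ * (Cs * Ci / ((1 - i t - r t) * Cs + i t * Ci + r t * Cr) * β * i t *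
          (1 - i t - r t) + φ * r t * i t - (γ + μ) * i t)) t := (hi t).const_mul γ
    have d2 : HasDerivAt (fun u => φ * (r u * i u))
        (φ * ((γ * i t - φ * r t * i t - μ * r t) * i t +
          r t * (Cs * Ci / ((1 - i t - r t) * Cs + i t * Ci + r t * Cr) * β * i t *
            (1 - i t - r t) + φ * r t * i t - (γ + μ) * i t))) t :=
      ((hr t).mul (hi t)).const_mul φ
    have d3 : HasDerivAt (fun u => Real.log (i u))
        ((Cs * Ci / ((1 - i t - r t) * Cs + i t * Ci + r t * Cr) * β * i t *
          (1 - i t - r t) + φ * r t * i t - (γ + μ) * i t) / i t) t :=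
      (hi t).log (hi0 t).ne'
    have d4 : HasDerivAt (fun u => μ * (r u * Real.log (i u)))
        (μ * ((γ * i t - φ * r t * i t - μ * r t) * Real.log (i t) +
          r t * ((Cs * Ci / ((1 - i t - r t) * Cs + i t * Ci + r t * Cr) * β * i t *
            (1 - i t - r t) + φ * r t * i t - (γ + μ) * i t) / i t))) t :=
      ((hr t).mul d3).const_mul μ
    have d5 : HasDerivAt (fun u => W (r u))
        (w (r t) * (γ * i t - φ * r t * i t - μ * r t)) t :=
      (hW (r t) (hrU t)).comp t (hr t)
    have dall := ((d1.sub d2).sub d4).add d5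
    have : h = fun u => γ * i u - φ * (r u * i u) - μ * (r u * Real.log (i u)) + W (r u) :=
      hhdef
    rw [this]
    refine dall.congr_deriv ?_
    symm
    rw [hbdef, hΦdef]
    have hDne := (hD t).ne'
    have hine := (hi0 t).ne'
    field_simp
    ring
  -- key sign lemma
  have hsign : ∀ t, b t * Φ t ≤ 0 ∧ (b t * Φ t = 0 → b t = 0) := by
    intro t
    obtain ⟨hp, hist, hDst⟩ := hUfacts (r t) (hrU t)
    have hb : b t = (γ - φ * r t) * (i t - istar (r t)) := by
      rw [hbdef, histar]
      field_simp
    have hΦ : Φ t = -((i t - istar (r t)) *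
        (Cs * Ci * β * ((1 - r t) * Ci + r t * Cr) /
          (((1 - i t - r t) * Cs + i t * Ci + r t * Cr) *
           ((1 - istar (r t) - r t) * Cs + istar (r t) * Ci + r t * Cr)) + φ))
        - μ * (Real.log (i t) - Real.log (istar (r t))) := by
      rw [hΦdef, hwdef]
      have hDne := (hD t).ne'
      have hDst' := hDst.ne'
      have hist' := hist.ne'
      beta_reduce
      field_simp
      have hD1 : Cs * (1 - i t - r t) + Ci * i t + r t * Cr ≠ 0 := by
        rw [mul_comm Cs, mul_comm Ci]; exact hDne
      have hD2 : Cs * (1 - istar (r t) - r t) + Ci * istar (r t) + r t * Cr ≠ 0 := by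
        rw [mul_comm Cs, mul_comm Ci]; exact hDst'
      field_simp
      ring
    have hlog : 0 ≤ (i t - istar (r t)) * (Real.log (i t) - Real.log (istar (r t))) := by
      rcases le_total (i t) (istar (r t)) with hle | hle
      · have hl := Real.log_le_log (hi0 t) hle
        have h1 : i t - istar (r t) ≤ 0 := by linarith
        have h2 : Real.log (i t) - Real.log (istar (r t)) ≤ 0 := by linarith
        nlinarith [mul_nonneg (neg_nonneg.mpr h1) (neg_nonneg.mpr h2)]
      · have hl := Real.log_le_log hist hle
        have h1 : 0 ≤ i t - istar (r t) := by linarith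
        have h2 : 0 ≤ Real.log (i t) - Real.log (istar (r t)) := by linarith
        exact mul_nonneg h1 h2
    have hK : 0 < Cs * Ci * β * ((1 - r t) * Ci + r t * Cr) /
          (((1 - i t - r t) * Cs + i t * Ci + r t * Cr) *
           ((1 - istar (r t) - r t) * Cs + istar (r t) * Ci + r t * Cr)) + φ := by
      have h1 : 0 < (1 - r t) * Ci + r t * Cr := by
        have := mul_pos (by linarith [hr1 t] : (0:ℝ) < 1 - r t) hCi
        have := mul_pos (hr0 t) hCr
        linarith
      have h2 : 0 < Cs * Ci * β * ((1 - r t) * Ci + r t * Cr) := by positivity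
      have h3 : 0 < ((1 - i t - r t) * Cs + i t * Ci + r t * Cr) *
          ((1 - istar (r t) - r t) * Cs + istar (r t) * Ci + r t * Cr) :=
        mul_pos (hD t) hDst
      have := div_pos h2 h3
      linarith
    set X := i t - istar (r t) with hXdef
    set K := Cs * Ci * β * ((1 - r t) * Ci + r t * Cr) /
          (((1 - i t - r t) * Cs + i t * Ci + r t * Cr) *
           ((1 - istar (r t) - r t) * Cs + istar (r t) * Ci + r t * Cr)) + φ with hKdef
    set L := Real.log (i t) - Real.log (istar (r t)) with hLdef
    have hprod : b t * Φ t = -((γ - φ * r t) * (X * X * K + μ * (X * L))) := by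
      rw [hb, hΦ]; ring
    constructor
    · rw [hprod]
      have hA : 0 ≤ X * X * K := mul_nonneg (mul_self_nonneg X) hK.le
      have hB : 0 ≤ μ * (X * L) := mul_nonneg hμ.le hlog
      have := mul_nonneg hp.le (by linarith : 0 ≤ X * X * K + μ * (X * L))
      linarith
    · intro h0
      rw [hb]
      rcases eq_or_ne X 0 with hX0 | hXne
      · rw [hX0, mul_zero]
      · exfalso
        have hApos : 0 < X * X * K := mul_pos (mul_self_pos.mpr hXne) hK
        have hB : 0 ≤ μ * (X * L) := mul_nonneg hμ.le hlog
        have hlt : b t * Φ t < 0 := by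
          rw [hprod]
          have := mul_pos hp (by linarith : 0 < X * X * K + μ * (X * L))
          linarith
        rw [h0] at hlt
        exact lt_irrefl 0 hlt
  -- h is nonincreasing and periodic, hence constant
  have hhdiff : Differentiable ℝ h := fun t => (hh t).differentiableAt
  have hanti : Antitone h := by
    apply antitone_of_deriv_nonpos hhdiff
    intro t
    rw [(hh t).deriv]
    exact (hsign t).1
  have hhper : ∀ t, h (t + T) = h t := by
    intro t
    have h1 := (hper t).1
    have h2 := (hper t).2
    simp only [hhdef, h1, h2]
  have hhmul : ∀ (n : ℕ) (t : ℝ), h (t + n * T) = h t := by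
    intro n
    induction n with
    | zero => intro t; simp
    | succ k ih =>
      intro t
      have he : t + ((k : ℝ) + 1) * T = (t + k * T) + T := by ring
      rw [Nat.cast_succ, he, hhper, ih]
  have hconst : ∀ s, h s = h 0 := by
    have key : ∀ s u : ℝ, s ≤ u → h s = h u := by
      intro s u hsu
      obtain ⟨n, hn⟩ := exists_nat_gt ((u - s) / T)
      have hnT : u ≤ s + n * T := by
        have := (div_lt_iff₀ hT).mp hn
        linarith
      have h1 : h (s + n * T) ≤ h u := hanti hnT
      have h2 : h u ≤ h s := hanti hsu
      rw [hhmul n s] at h1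
      linarith
    intro s
    rcases le_total s 0 with hs | hs
    · exact key s 0 hs
    · exact (key 0 s hs).symm
  have hzero : ∀ t, b t * Φ t = 0 := by
    intro t
    have hc : HasDerivAt h 0 t := by
      have hcc : HasDerivAt (fun _ : ℝ => h 0) 0 t := hasDerivAt_const t (h 0)
      exact hcc.congr_of_eventuallyEq
        (Filter.Eventually.of_forall (fun s => hconst s))
    exact (hh t).unique hc
  have hb0 : ∀ t, b t = 0 := fun t => (hsign t).2 (hzero t)
  -- conclude: r is constant, and i is determined by r
  have hrconst : ∀ s u : ℝ, r s = r u := by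
    apply is_const_of_deriv_eq_zero hrdiff
    intro t
    rw [(hr t).deriv]
    have := hb0 t
    simp only [hbdef] at this
    exact this
  have hiconst : ∀ s u : ℝ, i s = i u := by
    intro s u
    have h1 := hb0 s
    have h2 := hb0 u
    simp only [hbdef] at h1 h2
    have hrr : r s = r u := hrconst s u
    rw [hrr] at h1
    have hmul : (γ - φ * r u) * (i s - i u) = 0 := by linear_combination h1 - h2
    rcases mul_eq_zero.mp hmul with hz | hz
    · exfalso
      have := hφγ u
      linarith
    · linarith
  exact fun t t' => ⟨hiconst t t', hrconst t t'⟩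

/-- No limit cycles for the planar reduction of the rescaled SIR model with
nonlinear relapse when `Ci > Cs`: every periodic solution contained in the
region `{(i,r) : i > 0, r > 0, i + r < 1}` is constant. -/
theorem no_periodic_orbits
    (μ γ φ β Cs Ci Cr : ℝ)
    (hμ : 0 < μ) (hγ : 0 < γ) (hφ : 0 < φ) (hβ : 0 < β)
    (hCs : 0 < Cs) (hCi : 0 < Ci) (hCr : 0 < Cr) (hC : Ci > Cs)
    (g : ℝ → ℝ → ℝ → ℝ)
    (hg : g = fun s i r => Cs * Ci / (s * Cs + i * Ci + r * Cr))
    (g₁ g₂ : ℝ → ℝ → ℝ)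
    (hg₁ : g₁ = fun i r =>
      g (1 - i - r) i r * β * i * (1 - i - r) + φ * r * i - (γ + μ) * i)
    (hg₂ : g₂ = fun i r => γ * i - φ * r * i - μ * r)
    (x : ℝ → ℝ × ℝ)
    (hdiff : Differentiable ℝ x)
    (hode : ∀ t : ℝ, HasDerivAt x
      (g₁ (x t).1 (x t).2, g₂ (x t).1 (x t).2) t)
    (hregion : ∀ t : ℝ,
      0 < (x t).1 ∧ 0 < (x t).2 ∧ (x t).1 + (x t).2 < 1)
    (T : ℝ) (hT : 0 < T)
    (hper : ∀ t : ℝ, x (t + T) = x t) :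
    ∀ t t' : ℝ, x t = x t' := by
  have hi : ∀ t, HasDerivAt (fun u => (x u).1)
      (Cs * Ci / ((1 - (x t).1 - (x t).2) * Cs + (x t).1 * Ci + (x t).2 * Cr) * β * (x t).1 *
        (1 - (x t).1 - (x t).2) + φ * (x t).2 * (x t).1 - (γ + μ) * (x t).1) t := by
    intro t
    have h := hode t
    simp only [hg₁, hg₂, hg] at h
    exact h.fst
  have hr : ∀ t, HasDerivAt (fun u => (x u).2)
      (γ * (x t).1 - φ * (x t).2 * (x t).1 - μ * (x t).2) t := by
    intro t
    have h := hode t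
    simp only [hg₁, hg₂, hg] at h
    exact h.snd
  have key := sir_aux μ γ φ β Cs Ci Cr hμ hγ hφ hβ hCs hCi hCr hC
    (fun u => (x u).1) (fun u => (x u).2) hi hr hregion T hT
    (fun t => by beta_reduce; rw [hper t]; exact ⟨rfl, rfl⟩)
  intro t t'
  exact Prod.ext_iff.mpr ⟨(key t t').1, (key t t').2⟩
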